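/- arXiv:1705.03597 — 5 statements merged into one kernel-verified Lean document; each statement's English description precedes it below -/
import Mathlib

section
/- Let G be a finite nonempty linearly ordered set, Π a finite nonempty index set, and for each π ∈ Π let μ_π : G → ℝ be a probability mass function (μ_π ≥ 0, ∑_{g ∈ G} μ_π(g) = 1), with CDF F_π(g) = ∑_{g' ≤ g} μ_π(g') and strict CDF F⁻_π(g) = ∑_{g' < g} μ_π(g'). Let τ ∈ (0,1] and let q* = q_τ(g ↦ min_{π ∈ Π} F_π(g)) be the τ-lower quantile of the pointwise minimum of the CDFs. Then every π ∈ Π that minimizes F⁻_π(q*) over Π satisfies q_τ(F_π) = q*. -/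
open Classical

/-- The τ-lower quantile of `F : G → ℝ` on a finite nonempty linear order `G`:
the least `g` with `τ ≤ F g` (junk value `max G` if no such `g` exists). -/
noncomputable def lowQ {G : Type*} [Fintype G] [LinearOrder G] [Nonempty G]
    (τ : ℝ) (F : G → ℝ) : G :=
  if h : (Finset.univ.filter fun g => τ ≤ F g).Nonempty
  then (Finset.univ.filter fun g => τ ≤ F g).min' h
  else Finset.univ.max' Finset.univ_nonempty

/-- The CDF of a mass function `μ` on a finite linear order: `F(g) = ∑_{g' ≤ g} μ g'`. -/
noncomputable def cdf {G : Type*} [Fintype G] [LinearOrder G] (μ : G → ℝ) (g : G) : ℝ :=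
  ∑ g' ∈ Finset.univ.filter (fun g' => g' ≤ g), μ g'

/-- The strict CDF of a mass function `μ`: `F⁻(g) = ∑_{g' < g} μ g'`. -/
noncomputable def scdf {G : Type*} [Fintype G] [LinearOrder G] (μ : G → ℝ) (g : G) : ℝ :=
  ∑ g' ∈ Finset.univ.filter (fun g' => g' < g), μ g'

/-- with `q*` the τ-lower quantile of the pointwise minimum of the CDFs,
every `π` minimizing the strict CDF at `q*` satisfies `q_τ(F_π) = q*`. -/
theorem quantile_of_strict_cdf_minimizer
    {G P : Type*} [Fintype G] [LinearOrder G] [Nonempty G]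
    [Fintype P] [Nonempty P]
    (μ : P → G → ℝ)
    (hpos : ∀ π g, 0 ≤ μ π g) (hsum : ∀ π, ∑ g, μ π g = 1)
    (τ : ℝ) (hτ0 : 0 < τ) (hτ1 : τ ≤ 1)
    (qstar : G) (hqstar : qstar = lowQ τ (fun g => ⨅ π, cdf (μ π) g)) :
    ∀ π : P, (∀ π' : P, scdf (μ π) qstar ≤ scdf (μ π') qstar) →
      lowQ τ (cdf (μ π)) = qstar := by
  intro π hπ
  set m : G → ℝ := fun g => ⨅ π, cdf (μ π) g with hm
  have htop : ∀ π', cdf (μ π') (Finset.univ.max' Finset.univ_nonempty) = 1 := by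
    intro π'
    rw [cdf, Finset.filter_true_of_mem, hsum]
    intro g' _
    exact Finset.le_max' _ _ (Finset.mem_univ _)
  have hmtop : τ ≤ m (Finset.univ.max' Finset.univ_nonempty) :=
    le_ciInf fun π' => (htop π') ▸ hτ1
  have hS : (Finset.univ.filter fun g => τ ≤ m g).Nonempty :=
    ⟨_, Finset.mem_filter.2 ⟨Finset.mem_univ _, hmtop⟩⟩
  have hq : qstar = (Finset.univ.filter fun g => τ ≤ m g).min' hS := by
    rw [hqstar]; unfold lowQ; rw [dif_pos hS]
  have hqm : τ ≤ m qstar := by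
    have := Finset.min'_mem _ hS
    rw [← hq] at this
    exact (Finset.mem_filter.1 this).2
  have hqmin : ∀ g, τ ≤ m g → qstar ≤ g := by
    intro g hg
    rw [hq]
    exact Finset.min'_le _ g (Finset.mem_filter.2 ⟨Finset.mem_univ _, hg⟩)
  -- strict cdf of minimizer is < τ
  have hslt : scdf (μ π) qstar < τ := by
    by_contra h
    push_neg at h
    rcases (Finset.univ.filter fun g => g < qstar).eq_empty_or_nonempty with he | hne
    · rw [scdf, he, Finset.sum_empty] at h
      exact absurd h (not_le.2 hτ0)
    · set g0 := (Finset.univ.filter fun g => g < qstar).max' hne with hg0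
      have hg0lt : g0 < qstar := (Finset.mem_filter.1 (Finset.max'_mem _ hne)).2
      have hset : (Finset.univ.filter fun g' => g' < qstar) =
          (Finset.univ.filter fun g' => g' ≤ g0) := by
        ext g'
        simp only [Finset.mem_filter, Finset.mem_univ, true_and]
        constructor
        · intro hg'
          exact Finset.le_max' (Finset.univ.filter fun g => g < qstar) g' (Finset.mem_filter.2 ⟨Finset.mem_univ _, hg'⟩)
        · intro hg'
          exact lt_of_le_of_lt hg' hg0lt
      have hcg0 : ∀ π', τ ≤ cdf (μ π') g0 := by
        intro π'
        have : scdf (μ π') qstar = cdf (μ π') g0 := by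
          rw [scdf, cdf, hset]
        exact this ▸ le_trans h (hπ π')
      have : τ ≤ m g0 := le_ciInf hcg0
      exact absurd (hqmin g0 this) (not_le.2 hg0lt)
  -- cdf (μ π) g < τ for g < qstar
  have hlt : ∀ g, g < qstar → cdf (μ π) g < τ := by
    intro g hg
    refine lt_of_le_of_lt ?_ hslt
    rw [cdf, scdf]
    apply Finset.sum_le_sum_of_subset_of_nonneg
    · intro g' hg'
      simp only [Finset.mem_filter, Finset.mem_univ, true_and] at *
      exact lt_of_le_of_lt hg' hg
    · intro g' _ _; exact hpos π g'
  have hqcdf : τ ≤ cdf (μ π) qstar :=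
    le_trans hqm (ciInf_le (Finite.bddBelow_range _) π)
  have hS' : (Finset.univ.filter fun g => τ ≤ cdf (μ π) g).Nonempty :=
    ⟨qstar, Finset.mem_filter.2 ⟨Finset.mem_univ _, hqcdf⟩⟩
  unfold lowQ
  rw [dif_pos hS']
  apply le_antisymm
  · exact Finset.min'_le _ qstar (Finset.mem_filter.2 ⟨Finset.mem_univ _, hqcdf⟩)
  · apply Finset.le_min'
    intro g hg
    by_contra hlt'
    push_neg at hlt'
    exact absurd (Finset.mem_filter.1 hg).2 (not_le.2 (hlt g hlt'))
end

section
/- Let G be a finite nonempty linearly ordered set, Π₀ a finite nonempty set, and for each π ∈ Π₀ a probability mass function μ_π : G → ℝ with CDF F_π(g) = ∑_{g' ≤ g} μ_π(g') and strict CDF F⁻_π(g) = ∑_{g' < g} μ_π(g'). Let 0 < τ_1 < τ_2 < … < τ_L ≤ 1 and define recursively for i = 1, …, L: q*_i = max_{π ∈ Π_{i-1}} q_{τ_i}(F_π), and Π_i = {π ∈ Π_{i-1} : F⁻_π(q*_i) = min_{π' ∈ Π_{i-1}} F⁻_{π'}(q*_i)}. Then for every i = 1, …, L: Π_i is nonempty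 and q*_i = min{g ∈ G : min_{π ∈ Π_{i-1}} F_π(g) ≥ τ_i}, i.e. the optimal τ_i-quantile over Π_{i-1} equals the τ_i-lower quantile of the pointwise minimum of the CDFs over Π_{i-1}. -/
open Classical

/-- The recursive construction: `qPi μ τ 0 = (junk, Π₀)` and, for `i ≥ 1`,
`qPi μ τ i = (q*_i, Π_i)` where `q*_i = max_{π ∈ Π_{i-1}} q_{τ_i}(F_π)` and
`Π_i` is the set of `π ∈ Π_{i-1}` minimizing the strict CDF `F⁻_π(q*_i)` over `Π_{i-1}`. -/
noncomputable def qPi {G P : Type*} [Fintype G] [LinearOrder G] [Nonempty G] [Fintype P]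
    (μ : P → G → ℝ) (τ : ℕ → ℝ) : ℕ → G × Finset P
  | 0 => (Classical.arbitrary G, Finset.univ)
  | i + 1 =>
    let prev := (qPi μ τ i).2
    let q := ((prev.image fun π => lowQ (τ (i + 1)) (cdf (μ π))).max).unbotD
      (Classical.arbitrary G)
    (q, prev.filter fun π => ∀ π' ∈ prev, scdf (μ π) q ≤ scdf (μ π') q)

lemma cdf_mono {G : Type*} [Fintype G] [LinearOrder G] {μ : G → ℝ}
    (h : ∀ g, 0 ≤ μ g) {g1 g2 : G} (hg : g1 ≤ g2) : cdf μ g1 ≤ cdf μ g2 := by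
  apply Finset.sum_le_sum_of_subset_of_nonneg
  · intro x hx
    simp only [Finset.mem_filter, Finset.mem_univ, true_and] at *
    exact le_trans hx hg
  · intros; exact h _

lemma filter_ne {G : Type*} [Fintype G] [LinearOrder G] [Nonempty G]
    {μ : G → ℝ} (hsum : ∑ g, μ g = 1) {τ : ℝ} (hτ : τ ≤ 1) :
    (Finset.univ.filter fun g => τ ≤ cdf μ g).Nonempty := by
  refine ⟨Finset.univ.max' Finset.univ_nonempty, ?_⟩
  simp only [Finset.mem_filter, Finset.mem_univ, true_and]
  have : cdf μ (Finset.univ.max' Finset.univ_nonempty) = 1 := by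
    rw [cdf, Finset.filter_true_of_mem, hsum]
    intro x _
    exact Finset.le_max' _ _ (Finset.mem_univ x)
  linarith

lemma lowQ_spec {G : Type*} [Fintype G] [LinearOrder G] [Nonempty G]
    {τ : ℝ} {F : G → ℝ} (h : (Finset.univ.filter fun g => τ ≤ F g).Nonempty) :
    τ ≤ F (lowQ τ F) ∧ ∀ g, τ ≤ F g → lowQ τ F ≤ g := by
  rw [lowQ, dif_pos h]
  constructor
  · have := Finset.min'_mem _ h
    simpa using this
  · intro g hg
    exact Finset.min'_le _ _ (by simpa using hg)

lemma qPi_snd_nonempty {G P : Type*} [Fintype G] [LinearOrder G] [Nonempty G]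
    [Fintype P] [Nonempty P] (μ : P → G → ℝ) (τ : ℕ → ℝ) :
    ∀ i, ((qPi μ τ i).2).Nonempty
  | 0 => Finset.univ_nonempty
  | i + 1 => by
    have ih := qPi_snd_nonempty μ τ i
    show ((qPi μ τ i).2.filter _).Nonempty
    obtain ⟨π, hπ, hmin⟩ := Finset.exists_min_image (qPi μ τ i).2
      (fun π => scdf (μ π) ((((qPi μ τ i).2.image fun π =>
        lowQ (τ (i + 1)) (cdf (μ π))).max).unbotD (Classical.arbitrary G))) ih
    exact ⟨π, Finset.mem_filter.2 ⟨hπ, hmin⟩⟩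

/-- each `Π_i` is nonempty and the optimal quantile `q*_i` over `Π_{i-1}`
equals the `τ_i`-lower quantile of the pointwise minimum of the CDFs over `Π_{i-1}`. -/
theorem qPi_nonempty_and_quantile_of_min_cdf
    {G P : Type*} [Fintype G] [LinearOrder G] [Nonempty G]
    [Fintype P] [Nonempty P]
    (μ : P → G → ℝ)
    (hpos : ∀ π g, 0 ≤ μ π g) (hsum : ∀ π, ∑ g, μ π g = 1)
    (L : ℕ) (τ : ℕ → ℝ)
    (hτpos : ∀ i, 1 ≤ i → i ≤ L → 0 < τ i)
    (hτmono : ∀ i j, 1 ≤ i → i < j → j ≤ L → τ i < τ j)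
    (hτone : ∀ i, 1 ≤ i → i ≤ L → τ i ≤ 1) :
    ∀ i, 1 ≤ i → i ≤ L →
      ((qPi μ τ i).2).Nonempty ∧
      (qPi μ τ i).1 =
        lowQ (τ i) (fun g => sInf ((fun π => cdf (μ π) g) '' ((qPi μ τ (i - 1)).2 : Set P))) := by
  intro i h1 hL
  refine ⟨qPi_snd_nonempty μ τ i, ?_⟩
  obtain ⟨j, rfl⟩ : ∃ j, i = j + 1 := ⟨i - 1, (Nat.succ_pred_eq_of_pos h1).symm⟩
  simp only [Nat.add_sub_cancel]
  set τ' := τ (j + 1) with hτ'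
  have hτ1 : τ' ≤ 1 := hτone _ h1 hL
  set prev := (qPi μ τ j).2 with hprev
  have hne : prev.Nonempty := qPi_snd_nonempty μ τ j
  set f : P → G := fun π => lowQ τ' (cdf (μ π)) with hf
  have himg : (prev.image f).Nonempty := hne.image f
  have hq1 : (qPi μ τ (j + 1)).1 = (prev.image f).max' himg := by
    show (((prev.image f).max).unbotD (Classical.arbitrary G)) = _
    rw [← Finset.coe_max' himg, WithBot.unbotD_coe]
  set Q := (prev.image f).max' himg with hQ
  -- M g rewriting
  set M : G → ℝ := fun g => sInf ((fun π => cdf (μ π) g) '' (prev : Set P)) with hM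
  have hMmin : ∀ g, M g = (prev.image fun π => cdf (μ π) g).min' (hne.image _) := by
    intro g
    show sInf ((fun π => cdf (μ π) g) '' ↑prev) = _
    rw [← Finset.coe_image, (hne.image _).csInf_eq_min']
  have hMle : ∀ g, τ' ≤ M g ↔ ∀ π ∈ prev, τ' ≤ cdf (μ π) g := by
    intro g
    rw [hMmin g, Finset.le_min'_iff]
    constructor
    · intro h π hπ; exact h _ (Finset.mem_image_of_mem _ hπ)
    · intro h y hy
      obtain ⟨π, hπ, rfl⟩ := Finset.mem_image.1 hy
      exact h π hπ
  have hπspec : ∀ π, τ' ≤ cdf (μ π) (f π) ∧ ∀ g, τ' ≤ cdf (μ π) g → f π ≤ g :=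
    fun π => lowQ_spec (filter_ne (hsum π) hτ1)
  -- Q satisfies predicate for M
  have hQM : τ' ≤ M Q := by
    rw [hMle]
    intro π hπ
    have hfQ : f π ≤ Q := Finset.le_max' _ _ (Finset.mem_image_of_mem _ hπ)
    exact le_trans (hπspec π).1 (cdf_mono (hpos π) hfQ)
  have hMne : (Finset.univ.filter fun g => τ' ≤ M g).Nonempty :=
    ⟨Q, by simpa using hQM⟩
  have hMspec := lowQ_spec hMne
  rw [hq1]
  apply le_antisymm
  · -- Q ≤ lowQ τ' M : every f π ≤ lowQ
    apply Finset.max'_le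
    intro y hy
    obtain ⟨π, hπ, rfl⟩ := Finset.mem_image.1 hy
    exact (hπspec π).2 _ (((hMle _).1 hMspec.1) π hπ)
  · exact hMspec.2 _ hQM
end

section
/- Let G be a finite nonempty linearly ordered set, Π₀ a finite nonempty set, and for each π ∈ Π₀ a probability mass function μ_π : G → ℝ with CDF F_π(g) = ∑_{g' ≤ g} μ_π(g') and strict CDF F⁻_π(g) = ∑_{g' < g} μ_π(g'). Let 0 < τ_1 < … < τ_L ≤ 1, and define recursively q*_i = max_{π ∈ Π_{i-1}} q_{τ_i}(F_π) and Π_i = {π ∈ Π_{i-1} : F⁻_π(q*_i) = min_{π' ∈ Π_{i-1}} F⁻_{π'}(q*_i)}. Then every π ∈ Π_i satisfies q_{τ_i}(F_π) = q*_i, and the optimal quantiles are monotone: q*_1 ≤ q*_2 ≤ … ≤ q*_L. -/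
open Classical

section Helpers
variable {G : Type*} [Fintype G] [LinearOrder G] [Nonempty G]

lemma cdf_mono_s5 {μ : G → ℝ} (hpos : ∀ g, 0 ≤ μ g) : Monotone (cdf μ) := by
  intro a b hab
  apply Finset.sum_le_sum_of_subset_of_nonneg
  · intro x hx
    simp only [Finset.mem_filter, Finset.mem_univ, true_and] at *
    exact hx.trans hab
  · intro x _ _; exact hpos x

lemma cdf_le_scdf {μ : G → ℝ} (hpos : ∀ g, 0 ≤ μ g) {a b : G} (hab : a < b) :
    cdf μ a ≤ scdf μ b := by
  apply Finset.sum_le_sum_of_subset_of_nonneg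
  · intro x hx
    simp only [Finset.mem_filter, Finset.mem_univ, true_and] at *
    exact lt_of_le_of_lt hx hab
  · intro x _ _; exact hpos x

lemma filter_cdf_nonempty {μ : G → ℝ} (hsum : ∑ g, μ g = 1) {τ : ℝ} (hτ : τ ≤ 1) :
    (Finset.univ.filter fun g => τ ≤ cdf μ g).Nonempty := by
  refine ⟨Finset.univ.max' Finset.univ_nonempty, ?_⟩
  simp only [Finset.mem_filter, Finset.mem_univ, true_and]
  have h1 : cdf μ (Finset.univ.max' Finset.univ_nonempty) = 1 := by
    rw [← hsum]; unfold cdf; congr 1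
    apply Finset.filter_true_of_mem
    intro x _; exact Finset.le_max' _ _ (Finset.mem_univ x)
  linarith

lemma lowQ_eq_min' {τ : ℝ} {F : G → ℝ}
    (h : (Finset.univ.filter fun g => τ ≤ F g).Nonempty) :
    lowQ τ F = (Finset.univ.filter fun g => τ ≤ F g).min' h := by
  unfold lowQ; rw [dif_pos h]

lemma le_cdf_lowQ {μ : G → ℝ} (hsum : ∑ g, μ g = 1) {τ : ℝ} (hτ : τ ≤ 1) :
    τ ≤ cdf μ (lowQ τ (cdf μ)) := by
  have h := filter_cdf_nonempty hsum hτ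
  rw [lowQ_eq_min' h]
  have := Finset.min'_mem _ h
  simpa using this

lemma lowQ_le {μ : G → ℝ} (hsum : ∑ g, μ g = 1) {τ : ℝ} (hτ : τ ≤ 1)
    {g : G} (hg : τ ≤ cdf μ g) : lowQ τ (cdf μ) ≤ g := by
  rw [lowQ_eq_min' (filter_cdf_nonempty hsum hτ)]
  exact Finset.min'_le _ _ (by simp [hg])

lemma lowQ_mono_tau {μ : G → ℝ} (hsum : ∑ g, μ g = 1) {τ τ' : ℝ}
    (h : τ ≤ τ') (h1 : τ' ≤ 1) : lowQ τ (cdf μ) ≤ lowQ τ' (cdf μ) :=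
  lowQ_le hsum (h.trans h1) (h.trans (le_cdf_lowQ hsum h1))

lemma scdf_lowQ_lt {μ : G → ℝ} (hpos : ∀ g, 0 ≤ μ g) (hsum : ∑ g, μ g = 1)
    {τ : ℝ} (hτ0 : 0 < τ) (hτ1 : τ ≤ 1) : scdf μ (lowQ τ (cdf μ)) < τ := by
  set q := lowQ τ (cdf μ) with hq
  by_cases h : (Finset.univ.filter fun g => g < q).Nonempty
  · set m := (Finset.univ.filter fun g => g < q).max' h with hm
    have hmq : m < q := by
      have := Finset.max'_mem _ h
      simpa [← hm] using this
    have heq : scdf μ q = cdf μ m := by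
      unfold scdf cdf; congr 1
      ext x
      simp only [Finset.mem_filter, Finset.mem_univ, true_and]
      constructor
      · intro hx; exact Finset.le_max' _ _ (by simpa using hx)
      · intro hx; exact lt_of_le_of_lt hx hmq
    rw [heq]
    by_contra hc
    push_neg at hc
    exact absurd (lowQ_le hsum hτ1 hc) (not_le.mpr hmq)
  · rw [Finset.not_nonempty_iff_eq_empty] at h
    have : scdf μ q = 0 := by unfold scdf; rw [h, Finset.sum_empty]
    linarith

lemma lowQ_eq_of {μ : G → ℝ} (hpos : ∀ g, 0 ≤ μ g) (hsum : ∑ g, μ g = 1)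
    {τ : ℝ} (hτ1 : τ ≤ 1) {q : G}
    (h1 : τ ≤ cdf μ q) (h2 : scdf μ q < τ) : lowQ τ (cdf μ) = q := by
  have hle := lowQ_le hsum hτ1 h1
  rcases hle.lt_or_eq with h | h
  · exfalso
    have ha := cdf_le_scdf hpos h
    have hb := le_cdf_lowQ hsum hτ1
    linarith
  · exact h

end Helpers


/-- every `π ∈ Π_i` attains the optimal quantile `q*_i`, and the optimal
quantiles are monotone: `q*_1 ≤ q*_2 ≤ … ≤ q*_L`. -/
theorem qPi_mem_attains_and_quantiles_monotone
    {G P : Type*} [Fintype G] [LinearOrder G] [Nonempty G]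
    [Fintype P] [Nonempty P]
    (μ : P → G → ℝ)
    (hpos : ∀ π g, 0 ≤ μ π g) (hsum : ∀ π, ∑ g, μ π g = 1)
    (L : ℕ) (τ : ℕ → ℝ)
    (hτpos : ∀ i, 1 ≤ i → i ≤ L → 0 < τ i)
    (hτmono : ∀ i j, 1 ≤ i → i < j → j ≤ L → τ i < τ j)
    (hτone : ∀ i, 1 ≤ i → i ≤ L → τ i ≤ 1) :
    (∀ i, 1 ≤ i → i ≤ L → ∀ π ∈ (qPi μ τ i).2,
        lowQ (τ i) (cdf (μ π)) = (qPi μ τ i).1) ∧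
    (∀ i j, 1 ≤ i → i ≤ j → j ≤ L → (qPi μ τ i).1 ≤ (qPi μ τ j).1) := by
  have hsnd : ∀ k : ℕ, (qPi μ τ (k+1)).2 = (qPi μ τ k).2.filter
      (fun π => ∀ π' ∈ (qPi μ τ k).2,
        scdf (μ π) (qPi μ τ (k+1)).1 ≤ scdf (μ π') (qPi μ τ (k+1)).1) := fun k => rfl
  have hfst : ∀ k : ℕ, (qPi μ τ (k+1)).1 =
      ((((qPi μ τ k).2).image fun π => lowQ (τ (k+1)) (cdf (μ π))).max).unbotD
        (Classical.arbitrary G) := fun k => rfl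
  have hsub : ∀ k : ℕ, (qPi μ τ (k+1)).2 ⊆ (qPi μ τ k).2 := by
    intro k; rw [hsnd k]; exact Finset.filter_subset _ _
  have hminprop : ∀ k : ℕ, ∀ π ∈ (qPi μ τ (k+1)).2, ∀ π' ∈ (qPi μ τ k).2,
      scdf (μ π) (qPi μ τ (k+1)).1 ≤ scdf (μ π') (qPi μ τ (k+1)).1 := by
    intro k π hπ
    rw [hsnd k, Finset.mem_filter] at hπ
    exact hπ.2
  have hne : ∀ i : ℕ, ((qPi μ τ i).2).Nonempty := by
    intro i; induction i with
    | zero => exact Finset.univ_nonempty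
    | succ k ih =>
      obtain ⟨π₀, hπ₀, hmin⟩ := Finset.exists_min_image ((qPi μ τ k).2)
        (fun π => scdf (μ π) ((qPi μ τ (k+1)).1)) ih
      rw [hsnd k]
      exact ⟨π₀, Finset.mem_filter.mpr ⟨hπ₀, hmin⟩⟩
  have hQspec : ∀ k : ℕ,
      (∀ π ∈ (qPi μ τ k).2, lowQ (τ (k+1)) (cdf (μ π)) ≤ (qPi μ τ (k+1)).1) ∧
      ∃ π ∈ (qPi μ τ k).2, lowQ (τ (k+1)) (cdf (μ π)) = (qPi μ τ (k+1)).1 := by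
    intro k
    have hs : (((qPi μ τ k).2).image fun π => lowQ (τ (k+1)) (cdf (μ π))).Nonempty :=
      (hne k).image _
    have hQ : (qPi μ τ (k+1)).1 =
        (((qPi μ τ k).2).image fun π => lowQ (τ (k+1)) (cdf (μ π))).max' hs := by
      rw [hfst k, ← Finset.coe_max', WithBot.unbotD_coe]
    constructor
    · intro π hπ
      rw [hQ]
      exact Finset.le_max' (((qPi μ τ k).2).image fun π => lowQ (τ (k+1)) (cdf (μ π))) _ (Finset.mem_image_of_mem _ hπ)
    · have hmem := Finset.max'_mem _ hs
      rw [Finset.mem_image] at hmem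
      obtain ⟨π, hπ, hπeq⟩ := hmem
      exact ⟨π, hπ, by rw [hQ, hπeq]⟩
  have attain : ∀ i, 1 ≤ i → i ≤ L → ∀ π ∈ (qPi μ τ i).2,
      lowQ (τ i) (cdf (μ π)) = (qPi μ τ i).1 := by
    intro i hi1 hiL π hπ
    obtain ⟨k, rfl⟩ : ∃ k, i = k + 1 := ⟨i - 1, by omega⟩
    have hτ1 : τ (k+1) ≤ 1 := hτone _ hi1 hiL
    have hτ0 : 0 < τ (k+1) := hτpos _ hi1 hiL
    have hπk : π ∈ (qPi μ τ k).2 := hsub k hπ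
    obtain ⟨hle, π', hπ', hπ'eq⟩ := hQspec k
    apply lowQ_eq_of (hpos π) (hsum π) hτ1
    · calc τ (k+1) ≤ cdf (μ π) (lowQ (τ (k+1)) (cdf (μ π))) := le_cdf_lowQ (hsum π) hτ1
        _ ≤ cdf (μ π) (qPi μ τ (k+1)).1 := cdf_mono_s5 (hpos π) (hle π hπk)
    · calc scdf (μ π) (qPi μ τ (k+1)).1 ≤ scdf (μ π') (qPi μ τ (k+1)).1 :=
            hminprop k π hπ π' hπ'
        _ < τ (k+1) := by rw [← hπ'eq]; exact scdf_lowQ_lt (hpos π') (hsum π') hτ0 hτ1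
  refine ⟨attain, ?_⟩
  have step : ∀ i, 1 ≤ i → i + 1 ≤ L → (qPi μ τ i).1 ≤ (qPi μ τ (i+1)).1 := by
    intro i hi1 hiL
    obtain ⟨π, hπ⟩ := hne (i+1)
    have hπi : π ∈ (qPi μ τ i).2 := hsub i hπ
    have h1 : (qPi μ τ i).1 = lowQ (τ i) (cdf (μ π)) :=
      (attain i hi1 (by omega) π hπi).symm
    have h2 : lowQ (τ i) (cdf (μ π)) ≤ lowQ (τ (i+1)) (cdf (μ π)) :=
      lowQ_mono_tau (hsum π) (le_of_lt (hτmono i (i+1) hi1 (by omega) hiL))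
        (hτone (i+1) (by omega) hiL)
    have h3 := (hQspec i).1 π hπi
    rw [h1]; exact h2.trans h3
  intro i j hi hij hjL
  revert hjL
  induction j, hij using Nat.le_induction with
  | base => intro _; exact le_refl _
  | succ k hik ih =>
    intro hjL
    exact (ih (by omega)).trans (step k (by omega) hjL)
end

section
/- Consider a finite-horizon multi-objective MDP with finite nonempty state type S, finite nonempty action type A, transition probabilities p : S → A → S → ℝ (p s a s' ≥ 0 and ∑_{s'} p s a s' = 1), rewards R : Fin L → S → A → ℝ, and horizon T ≥ 1. Let π* be any FLMDP policy (a deterministic Markov policy selecting at each time t < T and state s an action in the innermost restricted argmax set A_L(t,s) of the FLMDP backward recursion). Then π* is lexicographically optimal for every tail problem: for every deterministic Markov policy π, every t ≤ T, and every state s, the vector (V^π_1(t,s), …, V^π_L(t,s)) is lexicographically less than or equal to (V^{π*}_1(t,s), …, V^{π*}_L(t,s)); moreover V^{π*}_i(t,s) = V*_i(t,s) for all i, t, s, where V* are the values produced by the FLMDP recursion. -/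
open Classical

/-- Value functions of a deterministic Markov policy `pol` in a finite-horizon
multi-objective MDP, by backward recursion: `V^π_i(T,s) = 0` and, for `t < T`,
`V^π_i(t,s) = R_i(s, π_t(s)) + ∑_{s'} p s (π_t(s)) s' · V^π_i(t+1,s')`. -/
noncomputable def Vpol {S A : Type*} [Fintype S] (p : S → A → S → ℝ) {L : ℕ}
    (R : Fin L → S → A → ℝ) (T : ℕ) (pol : ℕ → S → A) : ℕ → Fin L → S → ℝ
  | t => fun i s =>
    if h : t < T then
      R i s (pol t s) + ∑ s', p s (pol t s) s' * Vpol p R T pol (t + 1) i s'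
    else 0
  termination_by t => T - t
  decreasing_by omega

/-- The FLMDP optimal value functions `V*`, by backward recursion: `V*_i(T,s) = 0`
and, for `t < T`, `V*_i(t,s) = max_{a ∈ A_{i-1}(t,s)} Q_i(t,s,a)` where
`Q_i(t,s,a) = R_i(s,a) + ∑_{s'} p s a s' · V*_i(t+1,s')`, `A_0(t,s) = A`, and
`A_i(t,s)` is the set of maximizers of `Q_i(t,s,·)` over `A_{i-1}(t,s)`
(indices written 0-based via `Fin L`). -/
noncomputable def Vstar {S A : Type*} [Fintype S] [Fintype A] (p : S → A → S → ℝ) {L : ℕ}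
    (R : Fin L → S → A → ℝ) (T : ℕ) : ℕ → Fin L → S → ℝ
  | t => fun i s =>
    if h : t < T then
      sSup ((fun a => R i s a + ∑ s', p s a s' * Vstar p R T (t + 1) i s') ''
        ↑(Nat.rec (motive := fun _ => S → Finset A) (fun _ => (Finset.univ : Finset A))
            (fun j prev s => (prev s).filter fun a =>
              if hj : j < L then
                ∀ a' ∈ prev s,
                  (R ⟨j, hj⟩ s a' + ∑ s', p s a' s' * Vstar p R T (t + 1) ⟨j, hj⟩ s') ≤
                    (R ⟨j, hj⟩ s a + ∑ s', p s a s' * Vstar p R T (t + 1) ⟨j, hj⟩ s')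
              else True)
            (i : ℕ) s))
    else 0
  termination_by t => T - t
  decreasing_by all_goals omega

/-- The FLMDP state-action values `Q_i(t,s,a) = R_i(s,a) + ∑_{s'} p s a s' · V*_i(t+1,s')`
(0-based `i`). -/
noncomputable def Qstar {S A : Type*} [Fintype S] [Fintype A] (p : S → A → S → ℝ) {L : ℕ}
    (R : Fin L → S → A → ℝ) (T : ℕ) (t : ℕ) (i : Fin L) (s : S) (a : A) : ℝ :=
  R i s a + ∑ s', p s a s' * Vstar p R T (t + 1) i s'

/-- The FLMDP restricted action sets: `A_0(t,s) = A` and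
`A_{j+1}(t,s) = {a ∈ A_j(t,s) : Q_{j+1}(t,s,a) maximal over A_j(t,s)}`
(the `Q` index written 0-based). -/
noncomputable def Aset {S A : Type*} [Fintype S] [Fintype A] (p : S → A → S → ℝ) {L : ℕ}
    (R : Fin L → S → A → ℝ) (T : ℕ) (t : ℕ) : ℕ → S → Finset A
  | 0, _ => Finset.univ
  | j + 1, s =>
    if hj : j < L then
      (Aset p R T t j s).filter fun a =>
        ∀ a' ∈ Aset p R T t j s, Qstar p R T t ⟨j, hj⟩ s a' ≤ Qstar p R T t ⟨j, hj⟩ s a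
    else Aset p R T t j s

section Aux

variable {S A : Type*} [Fintype S] [Fintype A] [Nonempty S] [Nonempty A]
variable (p : S → A → S → ℝ) {L : ℕ} (R : Fin L → S → A → ℝ) (T : ℕ)

lemma Vpol_eq_of_lt (pol : ℕ → S → A) {t : ℕ} (h : t < T) (i : Fin L) (s : S) :
    Vpol p R T pol t i s
      = R i s (pol t s) + ∑ s', p s (pol t s) s' * Vpol p R T pol (t + 1) i s' := by
  rw [Vpol]; simp only [dif_pos h]

lemma Vpol_eq_of_ge (pol : ℕ → S → A) {t : ℕ} (h : ¬ t < T) (i : Fin L) (s : S) :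
    Vpol p R T pol t i s = 0 := by
  rw [Vpol]; simp only [dif_neg h]

lemma natrec_eq_aset (t : ℕ) : ∀ (n : ℕ) (s : S),
    (Nat.rec (motive := fun _ => S → Finset A) (fun _ => (Finset.univ : Finset A))
            (fun j prev s => (prev s).filter fun a =>
              if hj : j < L then
                ∀ a' ∈ prev s,
                  (R ⟨j, hj⟩ s a' + ∑ s', p s a' s' * Vstar p R T (t + 1) ⟨j, hj⟩ s') ≤
                    (R ⟨j, hj⟩ s a + ∑ s', p s a s' * Vstar p R T (t + 1) ⟨j, hj⟩ s')
              else True)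
            n s) = Aset p R T t n s := by
  intro n
  induction n with
  | zero => intro s; rfl
  | succ j ih =>
      intro s
      show Finset.filter _ (Nat.rec _ _ j s) = _
      unfold Aset
      by_cases hj : j < L
      · simp only [dif_pos hj, ih, Qstar]
        congr 1
      · simp only [dif_neg hj, ih, Finset.filter_true]

lemma aset_nonempty (t : ℕ) : ∀ (n : ℕ) (s : S), (Aset p R T t n s).Nonempty := by
  intro n
  induction n with
  | zero => intro s; exact ⟨Classical.arbitrary A, Finset.mem_univ _⟩
  | succ j ih =>
      intro s
      unfold Aset
      by_cases hj : j < L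
      · obtain ⟨a, ha, hmax⟩ := Finset.exists_max_image (Aset p R T t j s)
          (Qstar p R T t ⟨j, hj⟩ s) (ih s)
        exact ⟨a, by simp only [dif_pos hj, Finset.mem_filter]; exact ⟨ha, hmax⟩⟩
      · simp only [dif_neg hj]; exact ih s

lemma aset_succ_subset (t : ℕ) (n : ℕ) (s : S) :
    Aset p R T t (n + 1) s ⊆ Aset p R T t n s := by
  intro a ha
  rw [Aset] at ha
  by_cases hj : n < L
  · rw [dif_pos hj, Finset.mem_filter] at ha; exact ha.1
  · rwa [dif_neg hj] at ha

lemma aset_mono (t : ℕ) (s : S) : ∀ {n m : ℕ}, n ≤ m → Aset p R T t m s ⊆ Aset p R T t n s := by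
  intro n m h
  induction m with
  | zero => cases Nat.le_zero.mp h; exact subset_rfl
  | succ k ih =>
      rcases Nat.lt_or_ge n (k+1) with h' | h'
      · exact (aset_succ_subset p R T t k s).trans (ih (by omega))
      · have : n = k + 1 := le_antisymm h h'
        subst this; exact subset_rfl

lemma vstar_eq_sSup {t : ℕ} (h : t < T) (i : Fin L) (s : S) :
    Vstar p R T t i s = sSup (Qstar p R T t i s '' ↑(Aset p R T t (i : ℕ) s)) := by
  rw [Vstar]
  simp only [dif_pos h, natrec_eq_aset]
  rfl

lemma vstar_eq_of_ge {t : ℕ} (h : ¬ t < T) (i : Fin L) (s : S) :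
    Vstar p R T t i s = 0 := by
  rw [Vstar]; simp only [dif_neg h]

lemma qstar_le_vstar {t : ℕ} (h : t < T) (i : Fin L) {s : S} {a : A}
    (ha : a ∈ Aset p R T t (i : ℕ) s) :
    Qstar p R T t i s a ≤ Vstar p R T t i s := by
  rw [vstar_eq_sSup p R T h]
  exact le_csSup (((Aset p R T t (i : ℕ) s).finite_toSet.image _).bddAbove)
    ⟨a, ha, rfl⟩

lemma mem_aset_succ_iff {t : ℕ} (i : Fin L) (s : S) (a : A) :
    a ∈ Aset p R T t ((i : ℕ) + 1) s ↔
      a ∈ Aset p R T t (i : ℕ) s ∧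
        ∀ a' ∈ Aset p R T t (i : ℕ) s, Qstar p R T t i s a' ≤ Qstar p R T t i s a := by
  conv_lhs => rw [Aset]
  simp only [dif_pos i.isLt, Finset.mem_filter, Fin.eta]

lemma vstar_eq_qstar {t : ℕ} (h : t < T) (i : Fin L) {s : S} {a : A}
    (ha : a ∈ Aset p R T t ((i : ℕ) + 1) s) :
    Vstar p R T t i s = Qstar p R T t i s a := by
  obtain ⟨ha0, hmax⟩ := (mem_aset_succ_iff p R T i s a).mp ha
  refine le_antisymm ?_ (qstar_le_vstar p R T h i ha0)
  rw [vstar_eq_sSup p R T h]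
  refine csSup_le ?_ ?_
  · exact ((aset_nonempty p R T t (i : ℕ) s).to_set.image _)
  · rintro x ⟨a', ha', rfl⟩
    exact hmax a' ha'

end Aux

/-- any FLMDP policy `π*` (choosing actions in the innermost restricted
set `A_L(t,s)`) is lexicographically optimal for every tail problem, and its value
functions coincide with the values `V*` of the FLMDP recursion. -/
theorem flmdp_policy_lexicographically_optimal
    {S A : Type*} [Fintype S] [Fintype A] [Nonempty S] [Nonempty A]
    (p : S → A → S → ℝ)
    (hp0 : ∀ s a s', 0 ≤ p s a s') (hp1 : ∀ s a, ∑ s', p s a s' = 1)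
    {L : ℕ} (R : Fin L → S → A → ℝ) (T : ℕ) (hT : 1 ≤ T)
    (πstar : ℕ → S → A)
    (hstar : ∀ t < T, ∀ s, πstar t s ∈ Aset p R T t L s) :
    (∀ pol : ℕ → S → A, ∀ t ≤ T, ∀ s,
        toLex (fun i => Vpol p R T pol t i s) ≤ toLex (fun i => Vpol p R T πstar t i s)) ∧
    (∀ (i : Fin L) (t : ℕ) (s : S), Vpol p R T πstar t i s = Vstar p R T t i s) := by
  -- Part 2: the value of πstar equals Vstar, by backward induction.
  have part2 : ∀ n t, T ≤ t + n → ∀ (i : Fin L) (s : S),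
      Vpol p R T πstar t i s = Vstar p R T t i s := by
    intro n
    induction n with
    | zero =>
        intro t ht i s
        have h : ¬ t < T := by omega
        rw [Vpol_eq_of_ge p R T πstar h, vstar_eq_of_ge p R T h]
    | succ n ih =>
        intro t ht i s
        by_cases h : t < T
        · have hmem : πstar t s ∈ Aset p R T t ((i : ℕ) + 1) s :=
            aset_mono p R T t s (by omega) (hstar t h s)
          rw [Vpol_eq_of_lt p R T πstar h, vstar_eq_qstar p R T h i hmem, Qstar]
          congr 1
          refine Finset.sum_congr rfl fun s' _ => ?_
          rw [ih (t + 1) (by omega)]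
        · rw [Vpol_eq_of_ge p R T πstar h, vstar_eq_of_ge p R T h]
  have part2' : ∀ (i : Fin L) (t : ℕ) (s : S), Vpol p R T πstar t i s = Vstar p R T t i s :=
    fun i t s => part2 T t (by omega) i s
  -- Main lemma: coordinatewise optimality of Vstar given equality on earlier coordinates.
  have main : ∀ n t, T ≤ t + n → ∀ (pol : ℕ → S → A) (s : S) (i : Fin L),
      (∀ j : Fin L, j < i → Vpol p R T pol t j s = Vstar p R T t j s) →
      Vpol p R T pol t i s ≤ Vstar p R T t i s := by
    intro n
    induction n with
    | zero =>
        intro t ht pol s i _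
        have h : ¬ t < T := by omega
        rw [Vpol_eq_of_ge p R T pol h, vstar_eq_of_ge p R T h]
    | succ n ih =>
        intro t ht pol s i hj
        by_cases h : t < T
        case neg => rw [Vpol_eq_of_ge p R T pol h, vstar_eq_of_ge p R T h]
        set a := pol t s with ha_def
        -- Subclaim by induction on m ≤ i.val
        have sub : ∀ m : ℕ, m ≤ (i : ℕ) →
            a ∈ Aset p R T t m s ∧
            (∀ j : Fin L, (j : ℕ) < m → ∀ s', 0 < p s a s' →
              Vpol p R T pol (t + 1) j s' = Vstar p R T (t + 1) j s') := by
          intro m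
          induction m with
          | zero =>
              intro _
              exact ⟨Finset.mem_univ a, fun j hj' => absurd hj' (by omega)⟩
          | succ m ihm =>
              intro hm
              obtain ⟨hmem, htail⟩ := ihm (by omega)
              have hmL : m < L := by have := i.isLt; omega
              set jm : Fin L := ⟨m, hmL⟩ with hjm_def
              have heq : Vpol p R T pol t jm s = Vstar p R T t jm s :=
                hj jm (by simp [Fin.lt_def, hjm_def]; omega)
              have hle : ∀ s', p s a s' * Vpol p R T pol (t + 1) jm s'
                  ≤ p s a s' * Vstar p R T (t + 1) jm s' := by
                intro s'
                rcases (hp0 s a s').lt_or_eq with hps | hps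
                · refine mul_le_mul_of_nonneg_left ?_ (le_of_lt hps)
                  exact ih (t + 1) (by omega) pol s' jm
                    (fun j hj' => htail j (by exact hj') s' hps)
                · rw [← hps, zero_mul, zero_mul]
              have h1 : Vpol p R T pol t jm s ≤ Qstar p R T t jm s a := by
                rw [Vpol_eq_of_lt p R T pol h, Qstar, ← ha_def]
                exact add_le_add (le_refl _) (Finset.sum_le_sum fun s' _ => hle s')
              have h2 : Qstar p R T t jm s a ≤ Vstar p R T t jm s :=
                qstar_le_vstar p R T h jm hmem
              have hQ : Qstar p R T t jm s a = Vstar p R T t jm s :=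
                le_antisymm h2 (heq ▸ h1)
              have hsum : ∑ s', p s a s' * Vpol p R T pol (t + 1) jm s'
                  = ∑ s', p s a s' * Vstar p R T (t + 1) jm s' := by
                have e1 : R jm s a + ∑ s', p s a s' * Vpol p R T pol (t + 1) jm s'
                    = R jm s a + ∑ s', p s a s' * Vstar p R T (t + 1) jm s' := by
                  rw [← Qstar]
                  rw [hQ, ← heq, Vpol_eq_of_lt p R T pol h, ← ha_def]
                exact add_left_cancel e1
              have hterm : ∀ s', p s a s' * Vpol p R T pol (t + 1) jm s'
                  = p s a s' * Vstar p R T (t + 1) jm s' :=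
                fun s' => (Finset.sum_eq_sum_iff_of_le (fun s' _ => hle s')).mp hsum s'
                  (Finset.mem_univ s')
              refine ⟨?_, ?_⟩
              · rw [show m + 1 = (jm : ℕ) + 1 from rfl, mem_aset_succ_iff]
                exact ⟨hmem, fun a' ha' => (qstar_le_vstar p R T h jm ha').trans hQ.symm.le⟩
              · intro j hj' s' hps
                rcases Nat.lt_or_ge (j : ℕ) m with hlt | hge
                · exact htail j hlt s' hps
                · have hjv : (jm : ℕ) = m := rfl
                  have : j = jm := Fin.ext (by omega)
                  subst this
                  have := hterm s'
                  exact mul_left_cancel₀ (ne_of_gt hps) this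
        obtain ⟨hmemI, htailI⟩ := sub (i : ℕ) le_rfl
        have hle : ∀ s', p s a s' * Vpol p R T pol (t + 1) i s'
            ≤ p s a s' * Vstar p R T (t + 1) i s' := by
          intro s'
          rcases (hp0 s a s').lt_or_eq with hps | hps
          · refine mul_le_mul_of_nonneg_left ?_ (le_of_lt hps)
            exact ih (t + 1) (by omega) pol s' i (fun j hj' => htailI j hj' s' hps)
          · rw [← hps, zero_mul, zero_mul]
        calc Vpol p R T pol t i s ≤ Qstar p R T t i s a := by
              rw [Vpol_eq_of_lt p R T pol h, Qstar, ← ha_def]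
              exact add_le_add (le_refl _) (Finset.sum_le_sum fun s' _ => hle s')
          _ ≤ Vstar p R T t i s := qstar_le_vstar p R T h i hmemI
  refine ⟨?_, part2'⟩
  intro pol t _ s
  by_contra hcon
  have tri := Pi.isTrichotomous_lex (β := fun _ : Fin L => ℝ) (· < ·)
      (s := @fun _ => (· < ·)) IsWellFounded.wf
  obtain ⟨i, hji, hlt'⟩ :
      Pi.Lex (· < ·) (@fun _ => (· < ·)) (fun i => Vpol p R T πstar t i s)
        (fun i => Vpol p R T pol t i s) := by
    rcases @trichotomous _ _ tri (fun i => Vpol p R T pol t i s)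
        (fun i => Vpol p R T πstar t i s) with hlt | heq | hgt
    · exact absurd (Or.inr hlt) hcon
    · exact absurd (Or.inl (congrArg toLex heq)) hcon
    · exact hgt
  have : Vpol p R T pol t i s ≤ Vstar p R T t i s :=
    main T t (by omega) pol s i (fun j hj' => (hji j hj').symm.trans (part2' j t s))
  rw [← part2' i t s] at this
  exact absurd hlt' (not_lt.mpr this)
end

section
/- Consider a finite-horizon multi-objective MDP with finite nonempty state type S, finite nonempty action type A, transition probabilities p, rewards R : Fin L → S → A → ℝ, and horizon T, with V* the values of the FLMDP backward recursion. Let π be any deterministic Markov policy and t < T. If for every state s the vector (V^π_1(t+1,s), …, V^π_L(t+1,s)) is lexicographically less than or equal to (V*_1(t+1,s), …, V*_L(t+1,s)), then for every state s the vector (V^π_1(t,s), …, V^π_L(t,s)) is lexicographically less than or equal to (V*_1(t,s), …, V*_L(t,s)). -/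
open Classical

section Aux
variable {S A : Type*} [Fintype S] [Fintype A] [Nonempty S] [Nonempty A]
  (p : S → A → S → ℝ) {L : ℕ} (R : Fin L → S → A → ℝ) (T : ℕ)

lemma rec_eq_Aset (t : ℕ) (n : ℕ) (s : S) :
    (Nat.rec (motive := fun _ => S → Finset A) (fun _ => (Finset.univ : Finset A))
      (fun j prev s => (prev s).filter fun a =>
        if hj : j < L then
          ∀ a' ∈ prev s,
            (R ⟨j, hj⟩ s a' + ∑ s', p s a' s' * Vstar p R T (t + 1) ⟨j, hj⟩ s') ≤
              (R ⟨j, hj⟩ s a + ∑ s', p s a s' * Vstar p R T (t + 1) ⟨j, hj⟩ s')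
        else True) n s) = Aset p R T t n s := by
  induction n with
  | zero => rfl
  | succ n ih =>
    show (_ : Finset A).filter _ = _
    rw [Aset]
    by_cases hj : n < L
    · ext x; simp only [Finset.mem_filter, hj, dif_pos, ih]; exact Iff.rfl
    · simp only [hj, dif_pos, dif_neg, not_false_iff, ih, Finset.filter_true]

lemma Aset_nonempty (t : ℕ) (n : ℕ) (s : S) : (Aset p R T t n s).Nonempty := by
  induction n with
  | zero => exact Finset.univ_nonempty
  | succ n ih =>
    rw [Aset]
    by_cases hj : n < L
    · obtain ⟨b, hb, hmax⟩ := Finset.exists_max_image (Aset p R T t n s)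
        (Qstar p R T t ⟨n, hj⟩ s) ih
      exact ⟨b, by simp only [hj, dif_pos, Finset.mem_filter]; exact ⟨hb, hmax⟩⟩
    · simpa only [hj, dif_neg, not_false_iff] using ih

lemma Vstar_eq_sup' {t : ℕ} (ht : t < T) (i : Fin L) (s : S) :
    Vstar p R T t i s =
      (Aset p R T t i.val s).sup' (Aset_nonempty p R T t i.val s) (Qstar p R T t i s) := by
  rw [Vstar]
  simp only [ht, dif_pos, rec_eq_Aset]
  rw [Finset.sup'_eq_csSup_image]
  rfl

lemma Qstar_le_Vstar {t : ℕ} (ht : t < T) {i : Fin L} {s : S} {a : A}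
    (ha : a ∈ Aset p R T t i.val s) : Qstar p R T t i s a ≤ Vstar p R T t i s := by
  rw [Vstar_eq_sup' p R T ht]
  exact Finset.le_sup' _ ha

lemma Qstar_eq_Vstar {t : ℕ} (ht : t < T) {i : Fin L} {s : S} {a : A}
    (ha : a ∈ Aset p R T t i.val s)
    (hmax : ∀ a' ∈ Aset p R T t i.val s, Qstar p R T t i s a' ≤ Qstar p R T t i s a) :
    Qstar p R T t i s a = Vstar p R T t i s := by
  refine le_antisymm (Qstar_le_Vstar p R T ht ha) ?_
  rw [Vstar_eq_sup' p R T ht]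
  exact Finset.sup'_le _ _ hmax

lemma Vpol_eq (pol : ℕ → S → A) {t : ℕ} (ht : t < T) (i : Fin L) (s : S) :
    Vpol p R T pol t i s =
      R i s (pol t s) + ∑ s', p s (pol t s) s' * Vpol p R T pol (t + 1) i s' := by
  rw [Vpol]
  simp only [ht, dif_pos]

end Aux

lemma lexB {L : ℕ} {f g : Fin L → ℝ} (h : toLex f ≤ toLex g) (i : Fin L)
    (hpre : ∀ j, j < i → f j = g j) : f i ≤ g i := by
  rcases h.lt_or_eq with hlt | heq
  · obtain ⟨k, hk, hklt⟩ := hlt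
    rcases lt_trichotomy i k with h1 | h1 | h1
    · exact le_of_eq (hk i h1)
    · exact le_of_lt (h1 ▸ hklt)
    · exact absurd (hpre k h1) (ne_of_lt hklt)
  · exact le_of_eq (congrFun (toLex_inj.mp heq) i)

lemma lexA {L : ℕ} {f g : Fin L → ℝ}
    (h : ∀ i, (∀ j, j < i → f j = g j) → f i ≤ g i) : toLex f ≤ toLex g := by
  by_cases heq : f = g
  · exact le_of_eq (congrArg toLex heq)
  · have hne : ∃ i, f i ≠ g i := Function.ne_iff.mp heq
    obtain ⟨i⟩ := hne
    classical
    set s : Finset (Fin L) := Finset.univ.filter (fun i => f i ≠ g i) with hs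
    have hsne : s.Nonempty := ⟨i, by simp [hs, ‹f i ≠ g i›]⟩
    set m := s.min' hsne with hm
    have hmne : f m ≠ g m := by
      have := s.min'_mem hsne
      simp only [hs, Finset.mem_filter] at this
      exact this.2
    have hpre : ∀ j, j < m → f j = g j := by
      intro j hj
      by_contra hne'
      exact absurd hj (not_lt.mpr (s.min'_le j (by simp [hs, hne'])))
    exact le_of_lt ⟨m, hpre, lt_of_le_of_ne (h m hpre) hmne⟩

lemma perIndex {S A : Type*} [Fintype S] [Fintype A] [Nonempty S] [Nonempty A]
    (p : S → A → S → ℝ)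
    (hp0 : ∀ s a s', 0 ≤ p s a s')
    {L : ℕ} (R : Fin L → S → A → ℝ) (T : ℕ)
    (pol : ℕ → S → A) {t : ℕ} (ht : t < T) {s : S} {j : Fin L}
    (hnext : ∀ s', toLex (fun i => Vpol p R T pol (t + 1) i s') ≤
        toLex (fun i => Vstar p R T (t + 1) i s'))
    (haj : pol t s ∈ Aset p R T t j.val s)
    (heqt : Vpol p R T pol t j s = Vstar p R T t j s)
    (heq' : ∀ s', 0 < p s (pol t s) s' → ∀ k, k < j →
        Vpol p R T pol (t + 1) k s' = Vstar p R T (t + 1) k s') :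
    (∀ s', 0 < p s (pol t s) s' →
        Vpol p R T pol (t + 1) j s' = Vstar p R T (t + 1) j s') ∧
    Qstar p R T t j s (pol t s) = Vstar p R T t j s := by
  set a := pol t s with ha
  have hterm : ∀ s' : S,
      0 ≤ p s a s' * (Vstar p R T (t + 1) j s' - Vpol p R T pol (t + 1) j s') := by
    intro s'
    rcases (hp0 s a s').eq_or_lt with h0 | hpos
    · rw [← h0, zero_mul]
    · exact mul_nonneg hpos.le
        (sub_nonneg.mpr (lexB (hnext s') j (heq' s' hpos)))
  have hQdiff : Qstar p R T t j s a - Vpol p R T pol t j s =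
      ∑ s', p s a s' * (Vstar p R T (t + 1) j s' - Vpol p R T pol (t + 1) j s') := by
    rw [Qstar, Vpol_eq p R T pol ht]
    rw [← ha]
    simp only [mul_sub, Finset.sum_sub_distrib]
    ring
  have hDnn : 0 ≤ ∑ s', p s a s' *
      (Vstar p R T (t + 1) j s' - Vpol p R T pol (t + 1) j s') :=
    Finset.sum_nonneg fun s' _ => hterm s'
  have hDle : ∑ s', p s a s' *
      (Vstar p R T (t + 1) j s' - Vpol p R T pol (t + 1) j s') ≤ 0 := by
    rw [← hQdiff, heqt]
    linarith [Qstar_le_Vstar p R T ht haj]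
  have hD0 : ∑ s', p s a s' *
      (Vstar p R T (t + 1) j s' - Vpol p R T pol (t + 1) j s') = 0 :=
    le_antisymm hDle hDnn
  constructor
  · intro s' hpos
    have hz := (Finset.sum_eq_zero_iff_of_nonneg fun s' _ => hterm s').mp hD0 s'
      (Finset.mem_univ s')
    rcases mul_eq_zero.mp hz with h | h
    · exact absurd h (ne_of_gt hpos)
    · linarith [sub_eq_zero.mp h]
  · have : Qstar p R T t j s a - Vpol p R T pol t j s = 0 := by rw [hQdiff, hD0]
    linarith [heqt]

/-- one-step propagation of lexicographic domination: if
`V^π(t+1, s) ≤_lex V*(t+1, s)` for every state `s`, then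
`V^π(t, s) ≤_lex V*(t, s)` for every state `s`. -/
theorem lex_le_step
    {S A : Type*} [Fintype S] [Fintype A] [Nonempty S] [Nonempty A]
    (p : S → A → S → ℝ)
    (hp0 : ∀ s a s', 0 ≤ p s a s') (hp1 : ∀ s a, ∑ s', p s a s' = 1)
    {L : ℕ} (R : Fin L → S → A → ℝ) (T : ℕ)
    (pol : ℕ → S → A) (t : ℕ) (ht : t < T)
    (hnext : ∀ s, toLex (fun i => Vpol p R T pol (t + 1) i s) ≤
        toLex (fun i => Vstar p R T (t + 1) i s)) :
    ∀ s, toLex (fun i => Vpol p R T pol t i s) ≤ toLex (fun i => Vstar p R T t i s) := by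
  intro s
  have key : ∀ n : ℕ, ∀ hn : n < L,
      (∀ j : Fin L, (j : ℕ) < n → Vpol p R T pol t j s = Vstar p R T t j s) →
      pol t s ∈ Aset p R T t n s ∧
      (∀ s', 0 < p s (pol t s) s' → ∀ j : Fin L, (j : ℕ) < n →
          Vpol p R T pol (t + 1) j s' = Vstar p R T (t + 1) j s') ∧
      Vpol p R T pol t ⟨n, hn⟩ s ≤ Vstar p R T t ⟨n, hn⟩ s := by
    intro n
    induction n using Nat.strong_induction_on with
    | _ n IH =>
      intro hn hpre
      have step : ∀ m, ∀ hm : m < n,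
          pol t s ∈ Aset p R T t m s ∧
          (∀ s', 0 < p s (pol t s) s' →
            Vpol p R T pol (t + 1) ⟨m, hm.trans hn⟩ s' =
              Vstar p R T (t + 1) ⟨m, hm.trans hn⟩ s') ∧
          Qstar p R T t ⟨m, hm.trans hn⟩ s (pol t s) = Vstar p R T t ⟨m, hm.trans hn⟩ s := by
        intro m hm
        obtain ⟨h1, h2, _⟩ := IH m hm (hm.trans hn) (fun j hj => hpre j (hj.trans hm))
        obtain ⟨hA, hB⟩ := perIndex p hp0 R T pol ht (j := ⟨m, hm.trans hn⟩) hnext h1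
          (hpre ⟨m, hm.trans hn⟩ hm) (fun s' hp k hk => h2 s' hp k hk)
        exact ⟨h1, hA, hB⟩
      have part2 : ∀ s', 0 < p s (pol t s) s' → ∀ j : Fin L, (j : ℕ) < n →
          Vpol p R T pol (t + 1) j s' = Vstar p R T (t + 1) j s' :=
        fun s' hp j hj => (step j.val hj).2.1 s' hp
      have part1 : pol t s ∈ Aset p R T t n s := by
        cases n with
        | zero => rw [Aset]; exact Finset.mem_univ _
        | succ m =>
          have hm : m < m + 1 := Nat.lt_succ_self m
          have hmL : m < L := hm.trans hn
          obtain ⟨hmem, _, hQ⟩ := step m hm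
          rw [Aset]
          simp only [hmL, dif_pos, Finset.mem_filter]
          refine ⟨hmem, fun a' ha' => ?_⟩
          rw [hQ]
          exact Qstar_le_Vstar p R T ht (i := ⟨m, hmL⟩) ha'
      refine ⟨part1, part2, ?_⟩
      have hsum : ∀ s' ∈ (Finset.univ : Finset S),
          p s (pol t s) s' * Vpol p R T pol (t + 1) ⟨n, hn⟩ s' ≤
            p s (pol t s) s' * Vstar p R T (t + 1) ⟨n, hn⟩ s' := by
        intro s' _
        rcases (hp0 s (pol t s) s').eq_or_lt with h0 | hpos
        · rw [← h0, zero_mul, zero_mul]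
        · exact mul_le_mul_of_nonneg_left
            (lexB (hnext s') ⟨n, hn⟩ (fun k hk => part2 s' hpos k hk)) hpos.le
      calc Vpol p R T pol t ⟨n, hn⟩ s
          = R ⟨n, hn⟩ s (pol t s) +
              ∑ s', p s (pol t s) s' * Vpol p R T pol (t + 1) ⟨n, hn⟩ s' :=
            Vpol_eq p R T pol ht _ s
        _ ≤ Qstar p R T t ⟨n, hn⟩ s (pol t s) :=
            add_le_add le_rfl (Finset.sum_le_sum hsum)
        _ ≤ Vstar p R T t ⟨n, hn⟩ s := Qstar_le_Vstar p R T ht part1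
  refine lexA fun i hpre => ?_
  exact (key i.val i.isLt (fun j hj => hpre j hj)).2.2
end
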